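/- Let (e_n)_{n∈ℕ} be an orthonormal basis of H, X = (e_1, e_1, e_1, e_2, e_3, ...) and Z = (e_1, −(1/2)e_1, (1/2)e_1, e_2, e_3, ...). Then for E = {1}, the 1×1 matrix A_{X,Z,E} = [⟨z_1, x_1⟩ − 1] is the zero matrix, hence not invertible, even though E satisfies the MRC for X. -/

import Mathlib

noncomputable section

variable {H : Type*} [NormedAddCommGroup H] [InnerProductSpace ℂ H] [CompleteSpace H]

/-- Example: with `(e n)` an orthonormal basis (indexed from `0`),
`X = (e 0, e 0, e 0, e 1, e 2, …)`, `Z = (e 0, −½ e 0, ½ e 0, e 1, e 2, …)`, and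
`E = {0}` (the first index), the `1×1` matrix `A_{X,Z,E} = [⟨z 0, x 0⟩ − 1]` is the
zero matrix, hence not invertible, even though `E` satisfies the MRC for `X`. -/
theorem stmt14 (e : HilbertBasis ℕ ℂ H) (x z : ℕ → H)
    (hx0 : x 0 = e 0) (hx1 : x 1 = e 0) (hx2 : x 2 = e 0)
    (hx : ∀ n, 3 ≤ n → x n = e (n - 2))
    (hz0 : z 0 = e 0) (hz1 : z 1 = -((1 : ℂ) / 2) • e 0) (hz2 : z 2 = ((1 : ℂ) / 2) • e 0)
    (hz : ∀ n, 3 ≤ n → z n = e (n - 2)) :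
    (Matrix.of (fun _ _ : Fin 1 => (inner ℂ (x 0) (z 0) : ℂ) - 1)) = 0 ∧
    ¬IsUnit (Matrix.of (fun _ _ : Fin 1 => (inner ℂ (x 0) (z 0) : ℂ) - 1)) ∧
    Dense ((Submodule.span ℂ (x '' (Set.univ \ {0})) : Submodule ℂ H) : Set H) := by
  have hinner : (inner ℂ (x 0) (z 0) : ℂ) = 1 := by
    rw [hx0, hz0]
    simpa using orthonormal_iff_ite.mp e.orthonormal 0 0
  have hmat : (Matrix.of (fun _ _ : Fin 1 => (inner ℂ (x 0) (z 0) : ℂ) - 1)) = 0 := by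
    ext i j
    simp [hinner]
  refine ⟨hmat, ?_, ?_⟩
  · rw [hmat]
    exact fun h => h.ne_zero rfl
  · have hsub : Set.range (e : ℕ → H) ⊆
        (Submodule.span ℂ (x '' (Set.univ \ {0})) : Submodule ℂ H) := by
      rintro _ ⟨n, rfl⟩
      apply Submodule.subset_span
      rcases n with _ | m
      · exact ⟨1, ⟨trivial, by simp⟩, hx1⟩
      · refine ⟨m + 3, ⟨trivial, by simp⟩, ?_⟩
        rw [hx (m + 3) (by omega)]
        have h32 : m + 3 - 2 = m + 1 := by omega
        rw [h32]
    have hd : Dense ((Submodule.span ℂ (Set.range (e : ℕ → H)) : Submodule ℂ H) : Set H) :=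
      Submodule.dense_iff_topologicalClosure_eq_top.mpr e.dense_span
    exact hd.mono (by exact_mod_cast Submodule.span_le.mpr hsub)

end
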